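/- arXiv:2302.09613 — 2 statements merged into one kernel-verified Lean document; each statement's English description precedes it below -/
import Mathlib

section
/- Let α > -1 and let F : ℝ → ℂ be 2π-periodic and absolutely continuous with derivative Ḟ integrable on (0,2π), and let f = P_α[F] be its α-harmonic extension. Then for every z ∈ 𝔻, the angular derivative satisfies ∂_θ f(z) = i(z·∂f(z) − z̄·∂̄f(z)) = (1/2π)∫₀^{2π} P_α(z e^{−it}) Ḟ(t) dt; that is, ∂_θ f = P_α[Ḟ]. -/
set_option maxHeartbeats 1000000


open Complex MeasureTheory Real Set

noncomputable section

/-- Wirtinger derivative `∂f = (f_x - i f_y)/2` of a function `f : ℂ → ℂ`,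
viewed as a real-differentiable map. -/
def wdz (f : ℂ → ℂ) (z : ℂ) : ℂ :=
  (fderiv ℝ f z 1 - Complex.I * fderiv ℝ f z Complex.I) / 2

/-- Wirtinger derivative `∂̄f = (f_x + i f_y)/2`. -/
def wdzbar (f : ℂ → ℂ) (z : ℂ) : ℂ :=
  (fderiv ℝ f z 1 + Complex.I * fderiv ℝ f z Complex.I) / 2

/-- The `α`-harmonic Poisson kernel
`P_α(z) = (1-|z|²)^{α+1} / ((1-z)(1-z̄)^{α+1})` (principal powers). -/
def alphaPoissonKernel (α : ℝ) (z : ℂ) : ℂ :=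
  (((1 - ‖z‖ ^ 2) ^ (α + 1) : ℝ) : ℂ) /
    ((1 - z) * (1 - (starRingEnd ℂ) z) ^ ((α : ℂ) + 1))

/-- The `α`-harmonic extension `P_α[F](z) = (1/2π) ∫₀^{2π} P_α(z e^{-it}) F(t) dt`. -/
def poissonExt (α : ℝ) (F : ℝ → ℂ) (z : ℂ) : ℂ :=
  (1 / (2 * Real.pi) : ℂ) *
    ∫ t in (0:ℝ)..(2 * Real.pi), alphaPoissonKernel α (z * Complex.exp (-Complex.I * t)) * F t

/-- The angular derivative `∂_θ f(z) = i (z ∂f(z) - z̄ ∂̄f(z))`. -/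
def angularDeriv (f : ℂ → ℂ) (z : ℂ) : ℂ :=
  Complex.I * (z * wdz f z - (starRingEnd ℂ) z * wdzbar f z)

/-- The integral mean `M_p(r,g) = ((1/2π) ∫₀^{2π} |g(r e^{iθ})|^p dθ)^{1/p}`. -/
def Mp (p : ℝ) (r : ℝ) (g : ℂ → ℂ) : ℝ :=
  ((1 / (2 * Real.pi)) *
      ∫ θ in (0:ℝ)..(2 * Real.pi),
        ‖g ((r : ℂ) * Complex.exp (Complex.I * θ))‖ ^ p) ^ (1 / p)

/-- The boundary `L^p` norm `‖G‖_{L^p} = ((1/2π) ∫₀^{2π} |G(t)|^p dt)^{1/p}`. -/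
def lpNormBdry (p : ℝ) (G : ℝ → ℂ) : ℝ :=
  ((1 / (2 * Real.pi)) * ∫ t in (0:ℝ)..(2 * Real.pi), ‖G t‖ ^ p) ^ (1 / p)

/-- The constant `c_α = Γ(α+1)/Γ(α/2+1)²`. -/
def cAlpha (α : ℝ) : ℝ := Real.Gamma (α + 1) / (Real.Gamma (α / 2 + 1)) ^ 2

/-- `I_α(r) = (1/2π) ∫₀^{2π} (1-r²)^α / |1 - r e^{it}|^{α+1} dt`. -/
def Ialpha (α r : ℝ) : ℝ :=
  (1 / (2 * Real.pi)) *
    ∫ t in (0:ℝ)..(2 * Real.pi),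
      (1 - r ^ 2) ^ α / (‖1 - (r : ℂ) * Complex.exp (Complex.I * t)‖) ^ (α + 1)

/-- `g_α(z) = ((1-|z|²)/(1-z̄))^α` (principal complex power). -/
def gAlpha (α : ℝ) (z : ℂ) : ℂ :=
  ((((1 - ‖z‖ ^ 2 : ℝ)) : ℂ) / (1 - (starRingEnd ℂ) z)) ^ (α : ℂ)

end

section AuxiliaryLemmas

private lemma angularDeriv_eq_fderiv_apply (f : ℂ → ℂ) (z : ℂ) :
    angularDeriv f z = fderiv ℝ f z (Complex.I * z) := by
  set a := fderiv ℝ f z 1 with ha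
  set b := fderiv ℝ f z Complex.I with hb
  set x := z.re with hx
  set y := z.im with hy
  have h2 : z = (x : ℂ) + (y : ℂ) * Complex.I := (Complex.re_add_im z).symm
  have h1 : (starRingEnd ℂ) z = (x : ℂ) - (y : ℂ) * Complex.I := by
    rw [h2]; simp [map_add, map_mul, Complex.conj_ofReal]; ring
  have hz : Complex.I * z = (-y : ℝ) • (1 : ℂ) + (x : ℝ) • Complex.I := by
    rw [h2]; simp only [Complex.real_smul, Complex.ofReal_neg, mul_one]
    linear_combination (y : ℂ) * Complex.I_sq
  rw [hz, map_add, _root_.map_smul, _root_.map_smul, ← ha, ← hb]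
  unfold angularDeriv wdz wdzbar
  rw [← ha, ← hb, h1, h2]
  simp only [Complex.real_smul, Complex.ofReal_neg]
  linear_combination ((y : ℂ) * a - (x : ℂ) * b) * Complex.I_sq

private lemma poissonKernel_contDiffOn (α : ℝ) :
    ContDiffOn ℝ 1 (alphaPoissonKernel α) (Metric.ball (0 : ℂ) 1) := by
  intro w hw
  apply ContDiffAt.contDiffWithinAt
  have hw1 : ‖w‖ < 1 := by simpa [Metric.mem_ball] using hw
  have habs : ∀ z : ℂ, (1 : ℝ) - ‖z‖ ^ 2 = 1 - (z.re * z.re + z.im * z.im) := by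
    intro z; rw [Complex.sq_norm, Complex.normSq_apply]
  have hinner : ContDiffAt ℝ 1 (fun z : ℂ => (1 : ℝ) - ‖z‖ ^ 2) w := by
    have : ContDiffAt ℝ 1 (fun z : ℂ => (1 : ℝ) - (z.re * z.re + z.im * z.im)) w := by
      apply ContDiffAt.sub contDiffAt_const
      exact ((Complex.reCLM.contDiff.mul Complex.reCLM.contDiff).add
        (Complex.imCLM.contDiff.mul Complex.imCLM.contDiff)).contDiffAt
    exact this.congr_of_eventuallyEq (Filter.Eventually.of_forall fun z => habs z)
  have hpos : (0 : ℝ) < 1 - ‖w‖ ^ 2 := by nlinarith [norm_nonneg w]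
  have hnum : ContDiffAt ℝ 1 (fun z : ℂ => (((1 - ‖z‖ ^ 2) ^ (α + 1) : ℝ) : ℂ)) w := by
    have h2 : ContDiffAt ℝ 1 (fun x : ℝ => x ^ (α + 1)) ((1 : ℝ) - ‖w‖ ^ 2) :=
      Real.contDiffAt_rpow_const_of_ne hpos.ne'
    exact Complex.ofRealCLM.contDiff.contDiffAt.comp w (h2.comp w hinner :)
  have hconj : ContDiffAt ℝ 1 (fun z : ℂ => 1 - (starRingEnd ℂ) z) w := by
    exact contDiffAt_const.sub (Complex.conjCLE.toContinuousLinearMap.contDiff.contDiffAt)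
  have hre : (1 - (starRingEnd ℂ) w).re = 1 - w.re := by simp
  have hrepos : (0 : ℝ) < (1 - (starRingEnd ℂ) w).re := by
    rw [hre]
    have h := lt_of_le_of_lt ((le_abs_self w.re).trans (Complex.abs_re_le_norm w)) hw1
    linarith
  have hslit : (1 - (starRingEnd ℂ) w) ∈ Complex.slitPlane := Or.inl hrepos
  have hne : (1 - (starRingEnd ℂ) w) ≠ 0 := by
    intro h; rw [h] at hrepos; simp at hrepos
  have hcpow : ContDiffAt ℝ 1 (fun u : ℂ => u ^ ((α : ℂ) + 1)) (1 - (starRingEnd ℂ) w) := by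
    have hlog : ContDiffAt ℂ 1 (fun u : ℂ => Complex.exp (Complex.log u * ((α : ℂ) + 1)))
        (1 - (starRingEnd ℂ) w) :=
      Complex.contDiff_exp.contDiffAt.comp _
        ((Complex.contDiffAt_log hslit).mul contDiffAt_const)
    have : ContDiffAt ℂ 1 (fun u : ℂ => u ^ ((α : ℂ) + 1)) (1 - (starRingEnd ℂ) w) := by
      refine hlog.congr_of_eventuallyEq ?_
      filter_upwards [isOpen_ne.mem_nhds hne] with u hu
      exact Complex.cpow_def_of_ne_zero hu _
    exact this.restrict_scalars ℝ
  have hden : ContDiffAt ℝ 1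
      (fun z : ℂ => (1 - z) * (1 - (starRingEnd ℂ) z) ^ ((α : ℂ) + 1)) w :=
    (contDiffAt_const.sub contDiffAt_id).mul (hcpow.comp w hconj :)
  have hne0 : (1 - w) * (1 - (starRingEnd ℂ) w) ^ ((α : ℂ) + 1) ≠ 0 := by
    apply mul_ne_zero
    · intro h
      have : w = 1 := by linear_combination -h
      rw [this] at hw1; simp at hw1
    · simp [Complex.cpow_eq_zero_iff, hne]
  exact (hnum.mul (hden.inv hne0)).congr_of_eventuallyEq
    (Filter.Eventually.of_forall fun z => div_eq_mul_inv _ _)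


private lemma integral_primitive_swap (u v : ℝ → ℂ) (b : ℝ) (hb : 0 < b)
    (hu : Continuous u) (hv : IntegrableOn v (Ioc 0 b)) :
    ∫ t in (0:ℝ)..b, u t * (∫ s in (0:ℝ)..t, v s) =
      ∫ s in (0:ℝ)..b, ((∫ t in (0:ℝ)..b, u t) - ∫ t in (0:ℝ)..s, u t) * v s := by
  have hmeas : MeasurableSet {p : ℝ × ℝ | p.2 ≤ p.1} :=
    measurableSet_le measurable_snd measurable_fst
  have huI : IntegrableOn u (Ioc 0 b) := (hu.integrableOn_Icc).mono_set Ioc_subset_Icc_self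
  have hprod : Integrable (Function.uncurry fun t s : ℝ => if s ≤ t then u t * v s else 0)
      ((volume.restrict (Ioc 0 b)).prod (volume.restrict (Ioc 0 b))) := by
    have h1 : Integrable (fun p : ℝ × ℝ => u p.1 * v p.2)
        ((volume.restrict (Ioc 0 b)).prod (volume.restrict (Ioc 0 b))) := huI.mul_prod hv
    have h2 := h1.indicator hmeas
    refine h2.congr (Filter.Eventually.of_forall fun p => ?_)
    simp only [Function.uncurry, Set.indicator_apply, Set.mem_setOf_eq]
  have lhs_eq : ∫ t in (0:ℝ)..b, u t * (∫ s in (0:ℝ)..t, v s)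
      = ∫ t in Ioc 0 b, ∫ s in Ioc 0 b, (if s ≤ t then u t * v s else 0) := by
    rw [intervalIntegral.integral_of_le hb.le]
    refine setIntegral_congr_fun measurableSet_Ioc (fun t ht => ?_)
    have h1 : ∫ s in Ioc 0 b, (if s ≤ t then u t * v s else 0)
        = ∫ s in Ioc 0 b, (Ioc 0 t).indicator (fun s => u t * v s) s := by
      refine setIntegral_congr_fun measurableSet_Ioc (fun s hs => ?_)
      simp only [Set.indicator_apply, mem_Ioc]
      by_cases h : s ≤ t <;> simp [h, hs.1]
    rw [h1, setIntegral_indicator measurableSet_Ioc]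
    have h3 : Ioc 0 b ∩ Ioc 0 t = Ioc 0 t := by
      rw [Set.Ioc_inter_Ioc]; simp [ht.2]
    rw [h3, intervalIntegral.integral_of_le ht.1.le, MeasureTheory.integral_const_mul]
  rw [lhs_eq, MeasureTheory.integral_integral_swap hprod]
  rw [intervalIntegral.integral_of_le hb.le]
  refine setIntegral_congr_fun measurableSet_Ioc (fun s hs => ?_)
  have h1 : ∫ t in Ioc 0 b, (if s ≤ t then u t * v s else 0)
      = ∫ t in Ioc 0 b, (Ici s).indicator (fun t => u t * v s) t := by
    refine setIntegral_congr_fun measurableSet_Ioc (fun t ht => ?_)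
    simp only [Set.indicator_apply, mem_Ici]
  rw [h1, setIntegral_indicator measurableSet_Ici]
  have h3 : Ioc 0 b ∩ Ici s = Icc s b := by
    ext t
    simp only [mem_inter_iff, mem_Ioc, mem_Ici, mem_Icc]
    constructor
    · rintro ⟨⟨_, htb⟩, hst⟩; exact ⟨hst, htb⟩
    · rintro ⟨hst, htb⟩; exact ⟨⟨lt_of_lt_of_le hs.1 hst, htb⟩, hst⟩
  rw [h3, integral_Icc_eq_integral_Ioc, ← intervalIntegral.integral_of_le hs.2,
    intervalIntegral.integral_mul_const]
  have hadj : (∫ t in (0:ℝ)..s, u t) + ∫ t in s..b, u t = ∫ t in (0:ℝ)..b, u t :=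
    intervalIntegral.integral_add_adjacent_intervals (hu.intervalIntegrable _ _)
      (hu.intervalIntegrable _ _)
  rw [show (∫ t in s..b, u t) = (∫ t in (0:ℝ)..b, u t) - ∫ t in (0:ℝ)..s, u t from
    by linear_combination hadj]

end AuxiliaryLemmas

/-- For an absolutely continuous `2π`-periodic boundary function `F` with
integrable derivative `F'`, the angular derivative of the `α`-harmonic extension
`f = P_α[F]` equals `P_α[F']` on the unit disk. -/

theorem angularDeriv_poissonExt_eq (α : ℝ) (hα : -1 < α)
(F F' : ℝ → ℂ)
    (hFper : Function.Periodic F (2 * Real.pi))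
    (hF'per : Function.Periodic F' (2 * Real.pi))
    (hint : IntervalIntegrable F' MeasureTheory.volume 0 (2 * Real.pi))
    (hmean : (∫ t in (0:ℝ)..(2 * Real.pi), F' t) = 0)
    (hAC : ∀ θ : ℝ, F θ = F 0 + ∫ t in (0:ℝ)..θ, F' t)
    :
    ∀ z ∈ Metric.ball (0 : ℂ) 1,
      angularDeriv (poissonExt α F) z =
        (1 / (2 * Real.pi) : ℂ) *
          ∫ t in (0:ℝ)..(2 * Real.pi),
            alphaPoissonKernel α (z * Complex.exp (-Complex.I * t)) * F' t := by
  intro z hz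
  have hzn : ‖z‖ < 1 := mem_ball_zero_iff.mp hz
  have hπ : (0:ℝ) < 2 * π := by positivity
  have hI : Set.uIoc (0:ℝ) (2*π) = Ioc 0 (2*π) := uIoc_of_le hπ.le
  have hIcc : uIcc (0:ℝ) (2*π) = Icc 0 (2*π) := uIcc_of_le hπ.le
  have hKcd : ContDiffOn ℝ 1 (alphaPoissonKernel α) (Metric.ball (0:ℂ) 1) := poissonKernel_contDiffOn α
  have hKc : ContinuousOn (alphaPoissonKernel α) (Metric.ball (0:ℂ) 1) := hKcd.continuousOn
  have hK' : ContinuousOn (fderiv ℝ (alphaPoissonKernel α)) (Metric.ball (0:ℂ) 1) :=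
    hKcd.continuousOn_fderiv_of_isOpen Metric.isOpen_ball le_rfl
  have hKdiff : ∀ w ∈ Metric.ball (0:ℂ) 1,
      HasFDerivAt (alphaPoissonKernel α) (fderiv ℝ (alphaPoissonKernel α) w) w := fun w hw =>
    (((hKcd w hw).contDiffAt (Metric.isOpen_ball.mem_nhds hw)).differentiableAt one_ne_zero).hasFDerivAt
  have hen : ∀ t : ℝ, ‖Complex.exp (-Complex.I * t)‖ = 1 := by
    intro t
    rw [Complex.norm_exp]
    simp
  have hec : Continuous fun t : ℝ => Complex.exp (-Complex.I * t) :=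
    Complex.continuous_exp.comp (continuous_const.mul Complex.continuous_ofReal)
  have hγc : Continuous fun t : ℝ => z * Complex.exp (-Complex.I * t) := continuous_const.mul hec
  have hγmem : ∀ t : ℝ, z * Complex.exp (-Complex.I * t) ∈ Metric.ball (0:ℂ) 1 := by
    intro t
    rw [mem_ball_zero_iff, norm_mul, hen t, mul_one]
    exact hzn
  have hFc : ContinuousOn F (Icc 0 (2*π)) := by
    have h1 : ContinuousOn (fun θ : ℝ => F 0 + ∫ t in (0:ℝ)..θ, F' t) (Icc 0 (2*π)) := by
      apply continuousOn_const.add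
      have := intervalIntegral.continuousOn_primitive_interval' hint
        (left_mem_uIcc (a := (0:ℝ)) (b := 2*π))
      rwa [hIcc] at this
    exact h1.congr fun θ _ => hAC θ
  set r : ℝ := (1 + ‖z‖)/2 with hr_def
  have hr1 : r < 1 := by rw [hr_def]; linarith
  have hzr : ‖z‖ < r := by rw [hr_def]; linarith
  have hrpos : (0:ℝ) < r := lt_of_le_of_lt (norm_nonneg z) hzr
  have hrsub : Metric.closedBall (0:ℂ) r ⊆ Metric.ball (0:ℂ) 1 := fun x hx =>
    mem_ball_zero_iff.mpr (lt_of_le_of_lt (mem_closedBall_zero_iff.mp hx) hr1)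
  obtain ⟨C, hC⟩ := (isCompact_closedBall (0:ℂ) r).exists_bound_of_continuousOn (hK'.mono hrsub)
  have hC0 : (0:ℝ) ≤ C :=
    le_trans (norm_nonneg _) (hC 0 (Metric.mem_closedBall_self hrpos.le))
  set ε : ℝ := r - ‖z‖ with hε_def
  have hεpos : 0 < ε := by rw [hε_def]; linarith
  have hballr : ∀ x ∈ Metric.ball z ε, ∀ t : ℝ,
      x * Complex.exp (-Complex.I * t) ∈ Metric.closedBall (0:ℂ) r := by
    intro x hx t
    rw [Metric.mem_closedBall, dist_zero_right, norm_mul, hen t, mul_one]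
    have h1 : ‖x - z‖ < ε := by rwa [Metric.mem_ball, dist_eq_norm] at hx
    have h2 : ‖x‖ ≤ ‖x - z‖ + ‖z‖ := by simpa using norm_add_le (x - z) z
    rw [hε_def] at h1
    linarith
  -- differentiability of the integrand in x
  have h_diff : ∀ t : ℝ, ∀ x ∈ Metric.ball z ε,
      HasFDerivAt (fun x => alphaPoissonKernel α (x * Complex.exp (-Complex.I * t)) * F t)
        (F t • ((fderiv ℝ (alphaPoissonKernel α) (x * Complex.exp (-Complex.I * t))).comp
          (ContinuousLinearMap.mul ℝ ℂ (Complex.exp (-Complex.I * t))))) x := by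
    intro t x hx
    have hmul : HasFDerivAt (fun y : ℂ => y * Complex.exp (-Complex.I * t))
        (ContinuousLinearMap.mul ℝ ℂ (Complex.exp (-Complex.I * t))) x := by
      refine ((ContinuousLinearMap.mul ℝ ℂ
        (Complex.exp (-Complex.I * t))).hasFDerivAt).congr_of_eventuallyEq
        (Filter.Eventually.of_forall fun y => ?_)
      simp [ContinuousLinearMap.mul_apply', mul_comm]
    have hk := hKdiff _ (hrsub (hballr x hx t))
    exact (hk.comp x hmul).mul_const (F t)
  have h_bound : ∀ t : ℝ, ∀ x ∈ Metric.ball z ε,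
      ‖F t • ((fderiv ℝ (alphaPoissonKernel α) (x * Complex.exp (-Complex.I * t))).comp
        (ContinuousLinearMap.mul ℝ ℂ (Complex.exp (-Complex.I * t))))‖ ≤ ‖F t‖ * C := by
    intro t x hx
    rw [norm_smul]
    have h2 : ‖ContinuousLinearMap.mul ℝ ℂ (Complex.exp (-Complex.I * t))‖ ≤ 1 := by
      exact le_trans (ContinuousLinearMap.opNorm_mul_apply_le ℝ ℂ _) (le_of_eq (hen t))
    have h3 : ‖fderiv ℝ (alphaPoissonKernel α) (x * Complex.exp (-Complex.I * t))‖ ≤ C :=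
      hC _ (hballr x hx t)
    have h5 : ‖(fderiv ℝ (alphaPoissonKernel α) (x * Complex.exp (-Complex.I * t))).comp
        (ContinuousLinearMap.mul ℝ ℂ (Complex.exp (-Complex.I * t)))‖ ≤ C := by
      refine le_trans (ContinuousLinearMap.opNorm_comp_le _ _) ?_
      calc ‖fderiv ℝ (alphaPoissonKernel α) (x * Complex.exp (-Complex.I * t))‖ *
            ‖ContinuousLinearMap.mul ℝ ℂ (Complex.exp (-Complex.I * t))‖
          ≤ C * 1 := mul_le_mul h3 h2 (norm_nonneg _) hC0
        _ = C := mul_one C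
    exact mul_le_mul_of_nonneg_left h5 (norm_nonneg (F t))
  have hKcont_t : ∀ x : ℂ, ‖x‖ < 1 →
      Continuous fun t : ℝ => alphaPoissonKernel α (x * Complex.exp (-Complex.I * t)) := by
    intro x hx
    refine hKc.comp_continuous (continuous_const.mul hec) fun t => ?_
    rw [mem_ball_zero_iff, norm_mul, hen t, mul_one]; exact hx
  have hF_meas : ∀ᶠ x in nhds z, AEStronglyMeasurable
      (fun t : ℝ => alphaPoissonKernel α (x * Complex.exp (-Complex.I * t)) * F t)
      (volume.restrict (Set.uIoc (0:ℝ) (2*π))) := by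
    filter_upwards [Metric.isOpen_ball.eventually_mem hz] with x hx
    rw [hI]
    exact (((hKcont_t x (mem_ball_zero_iff.mp hx)).continuousOn).mul
      (hFc.mono Ioc_subset_Icc_self)).aestronglyMeasurable measurableSet_Ioc
  have hF_int : IntervalIntegrable
      (fun t : ℝ => alphaPoissonKernel α (z * Complex.exp (-Complex.I * t)) * F t) volume 0 (2*π) := by
    apply ContinuousOn.intervalIntegrable
    rw [hIcc]
    exact ((hKcont_t z hzn).continuousOn).mul hFc
  have hLcont : Continuous fun t : ℝ =>
      fderiv ℝ (alphaPoissonKernel α) (z * Complex.exp (-Complex.I * t)) :=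
    hK'.comp_continuous hγc hγmem
  have hMcont : Continuous fun t : ℝ =>
      ContinuousLinearMap.mul ℝ ℂ (Complex.exp (-Complex.I * t)) :=
    (ContinuousLinearMap.mul ℝ ℂ).continuous.comp hec
  have hcompcont : Continuous fun t : ℝ =>
      (fderiv ℝ (alphaPoissonKernel α) (z * Complex.exp (-Complex.I * t))).comp
        (ContinuousLinearMap.mul ℝ ℂ (Complex.exp (-Complex.I * t))) :=
    hLcont.clm_comp hMcont
  have hF'contOn : ContinuousOn (fun t : ℝ => F t •
      ((fderiv ℝ (alphaPoissonKernel α) (z * Complex.exp (-Complex.I * t))).comp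
        (ContinuousLinearMap.mul ℝ ℂ (Complex.exp (-Complex.I * t))))) (Icc 0 (2*π)) :=
    hFc.smul hcompcont.continuousOn
  have hF'_meas : AEStronglyMeasurable (fun t : ℝ => F t •
      ((fderiv ℝ (alphaPoissonKernel α) (z * Complex.exp (-Complex.I * t))).comp
        (ContinuousLinearMap.mul ℝ ℂ (Complex.exp (-Complex.I * t)))))
      (volume.restrict (Set.uIoc (0:ℝ) (2*π))) := by
    rw [hI]
    exact (hF'contOn.mono Ioc_subset_Icc_self).aestronglyMeasurable measurableSet_Ioc
  have hInt' : IntervalIntegrable (fun t : ℝ => F t •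
      ((fderiv ℝ (alphaPoissonKernel α) (z * Complex.exp (-Complex.I * t))).comp
        (ContinuousLinearMap.mul ℝ ℂ (Complex.exp (-Complex.I * t))))) volume 0 (2*π) := by
    apply ContinuousOn.intervalIntegrable
    rw [hIcc]
    exact hF'contOn
  have hbound_int : IntervalIntegrable (fun t : ℝ => ‖F t‖ * C) volume 0 (2*π) := by
    apply ContinuousOn.intervalIntegrable
    rw [hIcc]
    exact hFc.norm.mul continuousOn_const
  have hG : HasFDerivAt
      (fun x : ℂ => ∫ t in (0:ℝ)..(2*π),
        alphaPoissonKernel α (x * Complex.exp (-Complex.I * t)) * F t)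
      (∫ t in (0:ℝ)..(2*π), F t •
        ((fderiv ℝ (alphaPoissonKernel α) (z * Complex.exp (-Complex.I * t))).comp
          (ContinuousLinearMap.mul ℝ ℂ (Complex.exp (-Complex.I * t))))) z := by
    apply intervalIntegral.hasFDerivAt_integral_of_dominated_of_fderiv_le
      (F' := fun x t => F t •
        ((fderiv ℝ (alphaPoissonKernel α) (x * Complex.exp (-Complex.I * t))).comp
          (ContinuousLinearMap.mul ℝ ℂ (Complex.exp (-Complex.I * t)))))
      (bound := fun t => ‖F t‖ * C) (Metric.ball_mem_nhds z hεpos) hF_meas hF_int hF'_meas ?_ hbound_int ?_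
    · exact Filter.Eventually.of_forall fun t _ x hx => h_bound t x hx
    · exact Filter.Eventually.of_forall fun t _ x hx => h_diff t x hx
  have hf : HasFDerivAt (poissonExt α F)
      ((1 / (2 * Real.pi) : ℂ) • (∫ t in (0:ℝ)..(2*π), F t •
        ((fderiv ℝ (alphaPoissonKernel α) (z * Complex.exp (-Complex.I * t))).comp
          (ContinuousLinearMap.mul ℝ ℂ (Complex.exp (-Complex.I * t)))))) z :=
    hG.const_mul ((1 / (2 * Real.pi) : ℂ))
  have hfd := hf.fderiv
  -- the t-derivative of the kernel along the circle
  have hψderiv : ∀ t : ℝ, HasDerivAt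
      (fun t : ℝ => alphaPoissonKernel α (z * Complex.exp (-Complex.I * t)))
      (fderiv ℝ (alphaPoissonKernel α) (z * Complex.exp (-Complex.I * t))
        ((z * Complex.exp (-Complex.I * t)) * (-Complex.I))) t := by
    intro t
    have h0 : HasDerivAt (fun w : ℂ => -Complex.I * w) (-Complex.I) (t : ℂ) := by
      simpa using (hasDerivAt_id (t : ℂ)).const_mul (-Complex.I)
    have hg : HasDerivAt (fun w : ℂ => z * Complex.exp (-Complex.I * w))
        (z * (Complex.exp (-Complex.I * (t:ℂ)) * -Complex.I)) (t : ℂ) := h0.cexp.const_mul z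
    have hγd : HasDerivAt (fun s : ℝ => z * Complex.exp (-Complex.I * s))
        ((z * Complex.exp (-Complex.I * (t:ℝ))) * (-Complex.I)) t := by
      have h2 := hg.comp_ofReal
      simpa [mul_assoc] using h2
    exact (hKdiff _ (hγmem t)).comp_hasDerivAt t hγd
  have hψ'cont : Continuous fun t : ℝ =>
      fderiv ℝ (alphaPoissonKernel α) (z * Complex.exp (-Complex.I * t))
        ((z * Complex.exp (-Complex.I * t)) * (-Complex.I)) :=
    hLcont.clm_apply (hγc.mul continuous_const)
  have hψper : alphaPoissonKernel α (z * Complex.exp (-Complex.I * ((2*π:ℝ):ℂ)))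
      = alphaPoissonKernel α (z * Complex.exp (-Complex.I * ((0:ℝ):ℂ))) := by
    have h1 : Complex.exp (-Complex.I * ((2*π:ℝ):ℂ)) = Complex.exp (-Complex.I * ((0:ℝ):ℂ)) := by
      push_cast
      rw [show -Complex.I * (2*(π:ℂ)) = -(2*π*Complex.I) by ring]
      rw [Complex.exp_neg, Complex.exp_two_pi_mul_I]
      simp
    rw [h1]
  have hFTC : ∀ s : ℝ, (∫ t in (0:ℝ)..s,
      fderiv ℝ (alphaPoissonKernel α) (z * Complex.exp (-Complex.I * t))
        ((z * Complex.exp (-Complex.I * t)) * (-Complex.I)))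
      = alphaPoissonKernel α (z * Complex.exp (-Complex.I * (s:ℂ)))
        - alphaPoissonKernel α (z * Complex.exp (-Complex.I * ((0:ℝ):ℂ))) := fun s =>
    intervalIntegral.integral_eq_sub_of_hasDerivAt (fun t _ => hψderiv t)
      (hψ'cont.intervalIntegrable _ _)
  -- integration by parts
  have hprim : ContinuousOn (fun θ : ℝ => ∫ s in (0:ℝ)..θ, F' s) (Icc 0 (2*π)) := by
    have := intervalIntegral.continuousOn_primitive_interval' hint
      (left_mem_uIcc (a := (0:ℝ)) (b := 2*π))
    rwa [hIcc] at this
  have hsum : (∫ t in (0:ℝ)..(2*π),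
      (fderiv ℝ (alphaPoissonKernel α) (z * Complex.exp (-Complex.I * t))
        ((z * Complex.exp (-Complex.I * t)) * (-Complex.I))) * F t)
      = -∫ t in (0:ℝ)..(2*π), alphaPoissonKernel α (z * Complex.exp (-Complex.I * t)) * F' t := by
    have h1 : EqOn
        (fun t : ℝ => (fderiv ℝ (alphaPoissonKernel α) (z * Complex.exp (-Complex.I * t))
          ((z * Complex.exp (-Complex.I * t)) * (-Complex.I))) * F t)
        (fun t : ℝ => (fderiv ℝ (alphaPoissonKernel α) (z * Complex.exp (-Complex.I * t))
          ((z * Complex.exp (-Complex.I * t)) * (-Complex.I))) * F 0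
          + (fderiv ℝ (alphaPoissonKernel α) (z * Complex.exp (-Complex.I * t))
          ((z * Complex.exp (-Complex.I * t)) * (-Complex.I))) * (∫ s in (0:ℝ)..t, F' s))
        (uIcc 0 (2*π)) := fun t _ => by simp only; rw [hAC t]; ring
    rw [intervalIntegral.integral_congr h1]
    have ha : IntervalIntegrable (fun t : ℝ =>
        (fderiv ℝ (alphaPoissonKernel α) (z * Complex.exp (-Complex.I * t))
          ((z * Complex.exp (-Complex.I * t)) * (-Complex.I))) * F 0) volume 0 (2*π) :=
      (hψ'cont.mul continuous_const).intervalIntegrable _ _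
    have hb2 : IntervalIntegrable (fun t : ℝ =>
        (fderiv ℝ (alphaPoissonKernel α) (z * Complex.exp (-Complex.I * t))
          ((z * Complex.exp (-Complex.I * t)) * (-Complex.I))) * (∫ s in (0:ℝ)..t, F' s))
        volume 0 (2*π) := by
      apply ContinuousOn.intervalIntegrable
      rw [hIcc]
      exact hψ'cont.continuousOn.mul hprim
    rw [intervalIntegral.integral_add ha hb2]
    have hz1 : (∫ t in (0:ℝ)..(2*π),
        (fderiv ℝ (alphaPoissonKernel α) (z * Complex.exp (-Complex.I * t))
          ((z * Complex.exp (-Complex.I * t)) * (-Complex.I))) * F 0) = 0 := by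
      rw [intervalIntegral.integral_mul_const, hFTC (2*π), hψper]
      simp
    rw [hz1, zero_add]
    rw [integral_primitive_swap _ F' (2*π) hπ hψ'cont hint.1]
    have h2 : EqOn
        (fun s : ℝ => ((∫ t in (0:ℝ)..(2*π),
          fderiv ℝ (alphaPoissonKernel α) (z * Complex.exp (-Complex.I * t))
            ((z * Complex.exp (-Complex.I * t)) * (-Complex.I)))
          - ∫ t in (0:ℝ)..s,
          fderiv ℝ (alphaPoissonKernel α) (z * Complex.exp (-Complex.I * t))
            ((z * Complex.exp (-Complex.I * t)) * (-Complex.I))) * F' s)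
        (fun s : ℝ => alphaPoissonKernel α (z * Complex.exp (-Complex.I * ((0:ℝ):ℂ))) * F' s
          - alphaPoissonKernel α (z * Complex.exp (-Complex.I * (s:ℂ))) * F' s)
        (uIcc 0 (2*π)) := by
      intro s _
      simp only
      rw [hFTC (2*π), hFTC s, hψper]
      ring
    rw [intervalIntegral.integral_congr h2]
    have hsub1 : IntervalIntegrable (fun s : ℝ =>
        alphaPoissonKernel α (z * Complex.exp (-Complex.I * ((0:ℝ):ℂ))) * F' s) volume 0 (2*π) :=
      hint.const_mul _
    have hsub2 : IntervalIntegrable (fun s : ℝ =>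
        alphaPoissonKernel α (z * Complex.exp (-Complex.I * (s:ℂ))) * F' s) volume 0 (2*π) := by
      apply hint.continuousOn_mul
      rw [hIcc]
      exact (hKcont_t z hzn).continuousOn
    rw [intervalIntegral.integral_sub hsub1 hsub2]
    rw [intervalIntegral.integral_const_mul, hmean, mul_zero, zero_sub]
  -- put everything together
  rw [angularDeriv_eq_fderiv_apply, hfd, ContinuousLinearMap.smul_apply,
    ContinuousLinearMap.intervalIntegral_apply hInt' (Complex.I * z)]
  have hpoint : ∀ t : ℝ, (F t •
      ((fderiv ℝ (alphaPoissonKernel α) (z * Complex.exp (-Complex.I * t))).comp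
        (ContinuousLinearMap.mul ℝ ℂ (Complex.exp (-Complex.I * t))))) (Complex.I * z)
      = -((fderiv ℝ (alphaPoissonKernel α) (z * Complex.exp (-Complex.I * t))
          ((z * Complex.exp (-Complex.I * t)) * (-Complex.I))) * F t) := by
    intro t
    rw [ContinuousLinearMap.smul_apply, ContinuousLinearMap.comp_apply,
      ContinuousLinearMap.mul_apply']
    rw [show Complex.exp (-Complex.I * (t:ℂ)) * (Complex.I * z)
      = -((z * Complex.exp (-Complex.I * (t:ℂ))) * (-Complex.I)) by ring]
    rw [map_neg, smul_eq_mul]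
    ring
  rw [intervalIntegral.integral_congr (fun t _ => hpoint t)]
  rw [intervalIntegral.integral_neg, hsum, neg_neg, smul_eq_mul]
end

section
/- Let −1 < α < 0 and let e(z) = P_α[e^{−iθ}](z) = (1/2π)∫₀^{2π} P_α(z e^{−it}) e^{−it} dt be the α-harmonic extension of the boundary function θ ↦ e^{−iθ}. Then ∂̄e(z) = (α+1)·(1−|z|²)^α for every z ∈ 𝔻; consequently, for every p ≥ −1/α one has ∫_𝔻 |∂̄e(z)|^p dA(z) = ∞ (so ∂̄e ∉ L^p(𝔻)), and sup_{0<r<1} M_1(r, ∂̄e) = ∞ (so ∂̄e ∉ H^1_G(𝔻)). -/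
open Complex MeasureTheory Real Set

noncomputable section

def Efun (α : ℝ) (z : ℂ) : ℂ :=
  (1 - (((1 - ‖z‖ ^ 2) ^ (α + 1) : ℝ) : ℂ)) / z

theorem base_mem (z u : ℂ) (hz1 : ‖z‖ < 1) (hu : ‖u‖ ≤ 1) :
    1 - (starRingEnd ℂ) z * u ∈ Complex.slitPlane := by
  rw [Complex.mem_slitPlane_iff]
  left
  have h1 : ((starRingEnd ℂ) z * u).re ≤ ‖z‖ := by
    calc ((starRingEnd ℂ) z * u).re ≤ ‖(starRingEnd ℂ) z * u‖ := Complex.re_le_norm _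
    _ = ‖z‖ * ‖u‖ := by simp [map_mul]
    _ ≤ ‖z‖ := by nlinarith [norm_nonneg z]
  have : (1 - (starRingEnd ℂ) z * u).re = 1 - ((starRingEnd ℂ) z * u).re := by
    simp [Complex.sub_re]
  rw [this]; linarith

theorem base_ne (z u : ℂ) (hz1 : ‖z‖ < 1) (hu : ‖u‖ ≤ 1) :
    (1 - (starRingEnd ℂ) z * u) ^ ((α : ℂ) + 1) ≠ 0 := by
  rw [Ne, Complex.cpow_eq_zero_iff]
  push_neg
  intro h
  exact absurd h (Complex.slitPlane_ne_zero (base_mem z u hz1 hu))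

theorem integrand_eq (α : ℝ) {z : ℂ} (hz1 : ‖z‖ < 1) (t : ℝ) :
    alphaPoissonKernel α (z * Complex.exp (-Complex.I * t)) * Complex.exp (-Complex.I * t) =
      deriv (circleMap 0 1) t •
        ((((1 - ‖z‖ ^ 2) ^ (α + 1) : ℝ) : ℂ) *
          ((1 - (starRingEnd ℂ) z * circleMap 0 1 t) ^ ((α:ℂ)+1))⁻¹ *
          (Complex.I * circleMap 0 1 t * (circleMap 0 1 t - z))⁻¹) := by
  have hu : circleMap 0 1 t = Complex.exp (Complex.I * t) := by
    simp [circleMap, mul_comm]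
  rw [deriv_circleMap, hu]
  set u := Complex.exp (Complex.I * t) with hudef
  have hune : u ≠ 0 := Complex.exp_ne_zero _
  have habsu : ‖u‖ = 1 := by
    rw [hudef, Complex.norm_exp]; simp
  have hinv : Complex.exp (-Complex.I * t) = u⁻¹ := by
    rw [hudef, ← Complex.exp_neg]; ring_nf
  have hconj : (starRingEnd ℂ) u = u⁻¹ := by
    rw [hudef, ← Complex.exp_conj, ← Complex.exp_neg]
    congr 1
    simp [map_mul, Complex.conj_I]
  have habs_arg : ‖z * u⁻¹‖ = ‖z‖ := by
    simp [map_mul, map_inv₀, habsu]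
  have hcz : (starRingEnd ℂ) (z * u⁻¹) = (starRingEnd ℂ) z * u := by
    rw [map_mul, map_inv₀, hconj, inv_inv]
  have huz : u - z ≠ 0 := by
    rw [sub_ne_zero]
    intro h
    rw [← h, habsu] at hz1
    exact lt_irrefl _ hz1
  have h1z : (1 : ℂ) - z * u⁻¹ ≠ 0 := by
    have he : (1:ℂ) - z*u⁻¹ = (u - z) * u⁻¹ := by field_simp
    simp [he, huz, hune]
  have hB : ((1 - (starRingEnd ℂ) z * u) ^ ((α:ℂ)+1)) ≠ 0 :=
    base_ne z u hz1 habsu.le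
  rw [alphaPoissonKernel, hinv, habs_arg, hcz, smul_eq_mul]
  field_simp

theorem poissonExt_eq (α : ℝ) {z : ℂ} (hz : z ∈ Metric.ball (0 : ℂ) 1) :
    poissonExt α (fun t => Complex.exp (-Complex.I * t)) z = Efun α z := by
  have hz1 : ‖z‖ < 1 := by simpa [Complex.dist_eq] using hz
  have hpos : (0:ℝ) < 1 - ‖z‖ ^ 2 := by nlinarith [norm_nonneg z]
  rcases eq_or_ne z 0 with rfl | hz0
  · have hker : ∀ t : ℝ, alphaPoissonKernel α ((0:ℂ) * Complex.exp (-Complex.I * t)) = 1 := by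
      intro t
      simp [alphaPoissonKernel, Complex.one_cpow]
    have hint : (∫ t in (0:ℝ)..(2 * Real.pi),
        alphaPoissonKernel α ((0:ℂ) * Complex.exp (-Complex.I * t)) * Complex.exp (-Complex.I * t))
        = ∫ t in (0:ℝ)..(2 * Real.pi), Complex.exp (-Complex.I * t) := by
      refine intervalIntegral.integral_congr fun t _ => by rw [hker t, one_mul]
    have hI : (-Complex.I) ≠ 0 := by simp [Complex.I_ne_zero]
    rw [poissonExt, hint, integral_exp_mul_complex hI]
    have h2 : Complex.exp (-Complex.I * ((2*Real.pi : ℝ):ℂ)) = 1 := by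
      push_cast
      rw [show (-Complex.I * (2*(Real.pi:ℂ))) = -(2*(Real.pi:ℂ)*Complex.I) by ring,
        Complex.exp_neg, Complex.exp_two_pi_mul_I]
      simp
    rw [h2]
    simp [Efun, Real.one_rpow]
  · set A : ℝ := (1 - ‖z‖ ^ 2) ^ (α+1) with hAdef
    have hApos : 0 < A := Real.rpow_pos_of_pos hpos _
    have hAne : ((A:ℝ):ℂ) ≠ 0 := Complex.ofReal_ne_zero.mpr hApos.ne'
    set h : ℂ → ℂ := fun u => ((1 - (starRingEnd ℂ) z * u) ^ ((α:ℂ)+1))⁻¹ with hh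
    have hdiff : ∀ u ∈ Metric.closedBall (0:ℂ) 1, DifferentiableAt ℂ h u := by
      intro u hu
      have hu1 : ‖u‖ ≤ 1 := by simpa [Complex.dist_eq] using hu
      apply DifferentiableAt.inv
      · exact DifferentiableAt.cpow
          ((differentiableAt_const _).sub (differentiableAt_id.const_mul _))
          (differentiableAt_const _) (base_mem z u hz1 hu1)
      · exact base_ne z u hz1 hu1
    have hdc : DiffContOnCl ℂ h (Metric.ball 0 1) :=
      ⟨fun u hu => (hdiff u (Metric.ball_subset_closedBall hu)).differentiableWithinAt,
       by
        rw [closure_ball (0:ℂ) one_ne_zero]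
        exact fun u hu => (hdiff u hu).continuousAt.continuousWithinAt⟩
    have H1 : (∮ u in C(0, 1), (u - z)⁻¹ • h u) = (2 * Real.pi * Complex.I : ℂ) • h z :=
      hdc.circleIntegral_sub_inv_smul hz
    have H0 : (∮ u in C(0, 1), (u - 0)⁻¹ • h u) = (2 * Real.pi * Complex.I : ℂ) • h 0 :=
      hdc.circleIntegral_sub_inv_smul (by simp)
    have hcont : ContinuousOn h (Metric.sphere (0:ℂ) 1) := fun u hu =>
      (hdiff u (Metric.sphere_subset_closedBall hu)).continuousAt.continuousWithinAt
    have hsphere_ne : ∀ u ∈ Metric.sphere (0:ℂ) 1, u - z ≠ 0 := by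
      intro u hu
      have habsu : ‖u‖ = 1 := by simpa [Complex.dist_eq] using hu
      rw [sub_ne_zero]
      intro h
      rw [← h, habsu] at hz1
      exact lt_irrefl _ hz1
    have hsphere_ne0 : ∀ u ∈ Metric.sphere (0:ℂ) 1, u ≠ 0 := by
      intro u hu
      have habsu : ‖u‖ = 1 := by simpa [Complex.dist_eq] using hu
      intro h; rw [h] at habsu; simp at habsu
    have hci1 : CircleIntegrable (fun u => (u - z)⁻¹ • h u) 0 1 := by
      apply ContinuousOn.circleIntegrable zero_le_one
      exact (ContinuousOn.inv₀ ((continuous_id.sub continuous_const).continuousOn)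
        hsphere_ne).smul hcont
    have hci0 : CircleIntegrable (fun u => (u - 0)⁻¹ • h u) 0 1 := by
      apply ContinuousOn.circleIntegrable zero_le_one
      refine (ContinuousOn.inv₀ ((continuous_id.sub continuous_const).continuousOn) ?_).smul hcont
      simpa using hsphere_ne0
    have key : (∫ t in (0:ℝ)..(2*Real.pi),
        alphaPoissonKernel α (z * Complex.exp (-Complex.I * t)) * Complex.exp (-Complex.I * t))
        = ∮ u in C(0, 1), ((A:ℝ):ℂ) * h u * (Complex.I * u * (u - z))⁻¹ := by
      rw [circleIntegral]
      exact intervalIntegral.integral_congr fun t _ => integrand_eq α hz1 t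
    have hEq2 : Set.EqOn (fun u => ((A:ℝ):ℂ) * h u * (Complex.I * u * (u - z))⁻¹)
        (fun u => (((A:ℝ):ℂ) * (Complex.I * z)⁻¹) •
          ((u - z)⁻¹ • h u - (u - 0)⁻¹ • h u)) (Metric.sphere (0:ℂ) 1) := by
      intro u hu
      have huz := hsphere_ne u hu
      have hune := hsphere_ne0 u hu
      simp only [smul_eq_mul, sub_zero]
      field_simp
      ring
    have hz' : h z = ((A:ℝ):ℂ)⁻¹ := by
      have hb : (1 : ℂ) - (starRingEnd ℂ) z * z = ((1 - ‖z‖ ^ 2 : ℝ) : ℂ) := by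
        have : (starRingEnd ℂ) z * z = ((Complex.normSq z : ℝ) : ℂ) := by
          rw [mul_comm, Complex.mul_conj]
        rw [this, ← Complex.sq_norm]
        push_cast
        ring
      rw [hh]
      simp only
      rw [hb, show ((α:ℂ)+1) = ((α+1 : ℝ):ℂ) by push_cast; ring,
        ← Complex.ofReal_cpow hpos.le]
    have hzero : h 0 = 1 := by simp [hh]
    rw [poissonExt, key, circleIntegral.integral_congr zero_le_one hEq2,
      circleIntegral.integral_smul, circleIntegral.integral_sub hci1 hci0, H1, H0, hz', hzero,
      Efun]
    have hπ : ((Real.pi : ℝ) : ℂ) ≠ 0 := Complex.ofReal_ne_zero.mpr Real.pi_ne_zero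
    have hI : Complex.I ≠ 0 := Complex.I_ne_zero
    simp only [smul_eq_mul]
    push_cast
    field_simp
    ring

theorem hasFDerivAt_sq_abs (z : ℂ) : HasFDerivAt (fun w : ℂ => ‖w‖ ^ 2)
    ((2 * z.re) • (Complex.reCLM : ℂ →L[ℝ] ℝ) + (2 * z.im) • (Complex.imCLM : ℂ →L[ℝ] ℝ)) z := by
  have hfun : (fun w : ℂ => ‖w‖ ^ 2) = fun w : ℂ => w.re * w.re + w.im * w.im := by
    funext w; rw [Complex.sq_norm, Complex.normSq_apply]
  rw [hfun]
  have hre : HasFDerivAt (fun w : ℂ => w.re) (Complex.reCLM : ℂ →L[ℝ] ℝ) z :=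
    Complex.reCLM.hasFDerivAt
  have him : HasFDerivAt (fun w : ℂ => w.im) (Complex.imCLM : ℂ →L[ℝ] ℝ) z :=
    Complex.imCLM.hasFDerivAt
  have h := (hre.mul hre).add (him.mul him)
  refine h.congr_fderiv ?_
  ext v
  simp [Complex.reCLM_apply, Complex.imCLM_apply]
  ring

theorem wdzbar_Efun_ne (α : ℝ) {z : ℂ} (hz1 : ‖z‖ < 1) (hz0 : z ≠ 0) :
    wdzbar (Efun α) z = ((α:ℂ)+1) * (((1 - ‖z‖ ^ 2) ^ α : ℝ) : ℂ) := by
  have hpos : (0:ℝ) < 1 - ‖z‖ ^ 2 := by nlinarith [norm_nonneg z]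
  set c : ℝ := (α+1) * (1 - ‖z‖ ^ 2) ^ α with hc
  have hn : HasFDerivAt (fun w : ℂ => 1 - ‖w‖ ^ 2)
      (-((2 * z.re) • (Complex.reCLM : ℂ →L[ℝ] ℝ) + (2 * z.im) • (Complex.imCLM : ℂ →L[ℝ] ℝ))) z := by
    have h := (hasFDerivAt_const (1:ℝ) z).sub (hasFDerivAt_sq_abs z)
    rw [zero_sub] at h
    exact h
  have hr : HasDerivAt (fun x : ℝ => x ^ (α+1)) c (1 - ‖z‖ ^ 2) := by
    have := Real.hasDerivAt_rpow_const (x := 1 - ‖z‖ ^ 2) (p := α+1) (Or.inl hpos.ne')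
    simpa [add_sub_cancel_right] using this
  have hN := hr.comp_hasFDerivAt z hn
  have hNC := Complex.ofRealCLM.hasFDerivAt.comp z hN
  have hInv : HasFDerivAt (fun w : ℂ => w⁻¹)
      ((ContinuousLinearMap.smulRight (1 : ℂ →L[ℂ] ℂ) (-(z^2)⁻¹)).restrictScalars ℝ) z :=
    ((hasDerivAt_inv hz0).hasFDerivAt).restrictScalars ℝ
  have hE : HasFDerivAt (fun w : ℂ => (1 - (((1 - ‖w‖ ^ 2) ^ (α+1) : ℝ) : ℂ)) * w⁻¹)
      ((1 - (((1 - ‖z‖ ^ 2) ^ (α+1) : ℝ) : ℂ)) •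
          ContinuousLinearMap.restrictScalars ℝ (ContinuousLinearMap.smulRight 1 (-(z ^ 2)⁻¹)) +
        z⁻¹ • (0 - Complex.ofRealCLM.comp (c • -((2 * z.re) • (Complex.reCLM : ℂ →L[ℝ] ℝ) +
          (2 * z.im) • (Complex.imCLM : ℂ →L[ℝ] ℝ))))) z :=
    ((hasFDerivAt_const (1:ℂ) z).sub hNC).mul hInv
  have hfun : Efun α = fun w : ℂ => (1 - (((1 - ‖w‖ ^ 2) ^ (α+1) : ℝ) : ℂ)) * w⁻¹ := by
    funext w; rw [Efun, div_eq_mul_inv]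
  rw [wdzbar, hfun, hE.fderiv]
  simp only [ContinuousLinearMap.add_apply, ContinuousLinearMap.smul_apply,
    ContinuousLinearMap.coe_comp', Function.comp_apply, ContinuousLinearMap.coe_sub',
    Pi.sub_apply, ContinuousLinearMap.coe_restrictScalars', ContinuousLinearMap.smulRight_apply,
    ContinuousLinearMap.one_apply, ContinuousLinearMap.neg_apply, Complex.ofRealCLM_apply,
    Complex.reCLM_apply, Complex.imCLM_apply, Complex.one_re, Complex.one_im, Complex.I_re,
    Complex.I_im, smul_eq_mul, ContinuousLinearMap.coe_smul', Pi.smul_apply,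
    ContinuousLinearMap.zero_apply, Pi.neg_apply]
  have hz' : (z.re : ℂ) + (z.im : ℂ) * Complex.I = z := Complex.re_add_im z
  rw [hc]
  push_cast
  field_simp
  linear_combination (2*((α:ℂ)+1) * (((1 - ‖z‖ ^ 2) ^ α : ℝ):ℂ) * z) * hz' +
    ((((1 - ‖z‖ ^ 2) ^ (α+1) : ℝ):ℂ) - 1) * Complex.I_sq

theorem wdzbar_Efun_zero (α : ℝ) :
    wdzbar (Efun α) 0 = ((α:ℂ)+1) * (((1 - ‖(0:ℂ)‖ ^ 2) ^ α : ℝ) : ℂ) := by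
  set g : ℝ → ℝ := fun x => 1 - (1-x) ^ (α+1) with hg
  have hg0 : g 0 = 0 := by simp [hg, Real.one_rpow]
  have hG : HasDerivAt g (α+1) 0 := by
    have h1 : HasDerivAt (fun x : ℝ => 1 - x) (-1) 0 := by
      have h := (hasDerivAt_const (0:ℝ) (1:ℝ)).sub (hasDerivAt_id (0:ℝ))
      rw [zero_sub] at h
      exact h
    have h2 : HasDerivAt (fun y : ℝ => y ^ (α+1)) (α+1) ((fun x : ℝ => 1 - x) 0) := by
      have := Real.hasDerivAt_rpow_const (x := (1:ℝ)) (p := α+1) (Or.inl one_ne_zero)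
      simpa [Real.one_rpow] using this
    have h3 := h2.comp (0:ℝ) h1
    have h4 := (hasDerivAt_const (0:ℝ) (1:ℝ)).sub h3
    have hfg : (fun x : ℝ => 1 - ((fun y : ℝ => y ^ (α+1)) ∘ (fun x : ℝ => 1 - x)) x) = g := by
      funext x; simp [hg, Function.comp]
    have h4 : HasDerivAt g (0 - (α + 1) * -1) 0 := by rw [← hfg]; exact h4
    convert h4 using 1
    ring
  have hs : Filter.Tendsto (slope g 0) (nhdsWithin 0 {(0:ℝ)}ᶜ) (nhds (α+1)) :=
    hasDerivAt_iff_tendsto_slope.mp hG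
  have hE0 : Efun α 0 = 0 := by simp [Efun, Real.one_rpow]
  set L : ℂ →L[ℝ] ℂ :=
    ((α+1 : ℝ)) • (Complex.conjCLE : ℂ ≃L[ℝ] ℂ).toContinuousLinearMap with hL
  have key : ∀ h : ℂ, h ≠ 0 → Efun α h - ((α+1:ℝ) : ℂ) * (starRingEnd ℂ) h
      = (starRingEnd ℂ) h * (((slope g 0 (‖h‖ ^ 2) - (α+1) : ℝ)) : ℂ) := by
    intro h hh
    have hx : (‖h‖ ^ 2 : ℝ) ≠ 0 := pow_ne_zero _ ((norm_ne_zero_iff.mpr hh))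
    have hinv : (h : ℂ)⁻¹ = (starRingEnd ℂ) h * (((‖h‖ ^2 : ℝ)):ℂ)⁻¹ := by
      rw [Complex.inv_def, Complex.normSq_eq_norm_sq]
      push_cast
      ring
    rw [Efun, div_eq_mul_inv, hinv, slope_def_field, hg0]
    simp only [hg]
    push_cast
    field_simp
    ring
  have hFD : HasFDerivAt (Efun α) L 0 := by
    rw [hasFDerivAt_iff_isLittleO_nhds_zero]
    rw [Asymptotics.isLittleO_iff]
    intro c hc
    obtain ⟨δ, hδ, hclose⟩ := Metric.tendsto_nhdsWithin_nhds.mp hs c hc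
    have hr : 0 < min 1 (Real.sqrt δ) := lt_min one_pos (Real.sqrt_pos.mpr hδ)
    rw [Metric.eventually_nhds_iff]
    refine ⟨min 1 (Real.sqrt δ), hr, fun {h} hmem => ?_⟩
    rcases eq_or_ne h 0 with rfl | hh
    · simp [hE0, hL]
    · have habs : ‖h‖ < Real.sqrt δ := by
        have : dist h 0 < min 1 (Real.sqrt δ) := hmem
        rw [Complex.dist_eq, sub_zero] at this
        exact lt_of_lt_of_le this (min_le_right _ _)
      have hx2 : ‖h‖ ^ 2 < δ := by
        have h1 : ‖h‖ ^ 2 < Real.sqrt δ ^ 2 := by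
          apply pow_lt_pow_left₀ habs (norm_nonneg h)
          norm_num
        rwa [Real.sq_sqrt hδ.le] at h1
      have hxne : ‖h‖ ^ 2 ≠ 0 := pow_ne_zero _ ((norm_ne_zero_iff.mpr hh))
      have hdist : dist (slope g 0 (‖h‖ ^ 2)) (α+1) < c := by
        apply hclose
        · exact hxne
        · rw [Real.dist_eq, sub_zero, _root_.abs_of_nonneg (by positivity)]
          exact hx2
      have heq : Efun α (0 + h) - Efun α 0 - L h
          = (starRingEnd ℂ) h * (((slope g 0 (‖h‖ ^ 2) - (α+1) : ℝ)) : ℂ) := by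
        rw [zero_add, hE0, sub_zero, hL]
        rw [← key h hh]
        simp [Complex.conjCLE_apply]
      rw [heq]
      rw [norm_mul]
      have h1 : ‖(starRingEnd ℂ) h‖ = ‖h‖ := by
        simp [Complex.norm_conj]
      rw [h1]
      rw [mul_comm]
      apply mul_le_mul_of_nonneg_right _ (norm_nonneg h)
      rw [Complex.norm_real, Real.norm_eq_abs, ← Real.dist_eq]
      exact hdist.le
  rw [wdzbar, hFD.fderiv]
  simp [hL, Complex.conjCLE_apply, Complex.conj_I, Real.one_rpow]
  ring_nf
  linear_combination (-(α:ℂ)/2 - 1/2) * Complex.I_sq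

theorem not_integrableOn_1d {β a : ℝ} (hβ : β ≤ -1) (ha : 0 < a) (ha1 : a ≤ 1) {c : ℝ}
    (hc : 0 < c) : ¬ IntegrableOn (fun y : ℝ => c * (a^2 - y^2) ^ β) (Ioo 0 a) volume := by
  intro H
  have hmin : ∀ y ∈ Ioo (0:ℝ) a, c * 2 ^ β * (a - y) ^ β ≤ c * (a^2 - y^2) ^ β := by
    intro y hy
    obtain ⟨hy0, hya⟩ := hy
    have h1 : a ^ 2 - y ^ 2 = (a - y) * (a + y) := by ring
    have hay : 0 < a - y := by linarith
    have hay2 : 0 < a + y := by linarith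
    rw [h1, Real.mul_rpow hay.le hay2.le]
    have h2 : (2:ℝ) ^ β ≤ (a + y) ^ β :=
      Real.rpow_le_rpow_of_nonpos hay2 (by linarith) (by linarith)
    have h3 : 0 < (a - y) ^ β := Real.rpow_pos_of_pos hay β
    nlinarith [mul_le_mul_of_nonneg_left h2 (mul_pos hc h3).le]
  -- the minorant is integrable
  have Hmin : IntegrableOn (fun y : ℝ => c * 2 ^ β * (a - y) ^ β) (Ioo 0 a) volume := by
    apply Integrable.mono H
    · refine ContinuousOn.aestronglyMeasurable ?_ measurableSet_Ioo
      apply continuousOn_const.mul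
      apply ContinuousOn.rpow_const (continuousOn_const.sub continuousOn_id)
      intro y hy
      exact Or.inl (by simpa using ne_of_gt (by linarith [hy.2] : (0:ℝ) < a - y))
    · rw [ae_restrict_iff' measurableSet_Ioo]
      filter_upwards with y
      intro hy
      obtain ⟨hy0, hya⟩ := hy
      have h3 : 0 < (a - y) ^ β := Real.rpow_pos_of_pos (by linarith) β
      have h4 : 0 < (a^2 - y^2) ^ β := Real.rpow_pos_of_pos (by nlinarith) β
      rw [Real.norm_eq_abs, Real.norm_eq_abs, _root_.abs_of_nonneg (by positivity),
        _root_.abs_of_nonneg (by positivity)]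
      exact hmin y ⟨hy0, hya⟩
  -- translate: u = a - y
  have Htrans : IntegrableOn (fun u : ℝ => c * 2 ^ β * u ^ β) (Ioo 0 a) volume := by
    have hmp : MeasurePreserving (fun y : ℝ => a - y) volume volume :=
      Measure.measurePreserving_sub_left volume a
    have hemb : MeasurableEmbedding (fun y : ℝ => a - y) :=
      (MeasurableEquiv.subLeft a).measurableEmbedding
    have hpre : (fun y : ℝ => a - y) ⁻¹' (Ioo 0 a) = Ioo 0 a := by
      ext y
      simp only [mem_preimage, mem_Ioo]
      constructor <;> (rintro ⟨h1, h2⟩; constructor <;> linarith)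
    have := (hmp.integrableOn_comp_preimage hemb
      (f := fun u : ℝ => c * 2 ^ β * u ^ β) (s := Ioo 0 a)).mp
    rw [hpre] at this
    exact this Hmin
  -- contradiction with rpow criterion
  have : IntegrableOn (fun u : ℝ => u ^ β) (Ioo 0 a) volume := by
    have hne : c * 2 ^ β ≠ 0 := by positivity
    have h6 := Htrans.const_mul (c * 2 ^ β)⁻¹
    have h5 : (fun u : ℝ => (c * 2^β)⁻¹ * (c * 2^β * u ^ β)) = fun u : ℝ => u ^ β := by
      funext u; field_simp
    rwa [h5] at h6
  rw [intervalIntegral.integrableOn_Ioo_rpow_iff ha] at this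
  linarith

theorem not_integrableOn_disk {β : ℝ} (hβ : β ≤ -1) {c : ℝ} (hc : 0 < c) :
    ¬ IntegrableOn (fun z : ℂ => c * (1 - ‖z‖ ^ 2) ^ β)
      (Metric.ball (0:ℂ) 1) volume := by
  intro H
  set e := Complex.measurableEquivRealProd.symm with he
  have hmp : MeasurePreserving e volume volume :=
    Complex.volume_preserving_equiv_real_prod.symm
  have hemb : MeasurableEmbedding e := Complex.measurableEquivRealProd.symm.measurableEmbedding
  have H2 := (hmp.integrableOn_comp_preimage hemb
      (f := fun z : ℂ => c * (1 - ‖z‖ ^ 2) ^ β)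
      (s := Metric.ball (0:ℂ) 1)).mpr H
  have habs : ∀ p : ℝ × ℝ, ‖e p‖ ^ 2 = p.1^2 + p.2^2 := by
    intro p
    rw [he, Complex.measurableEquivRealProd_symm_apply, Complex.sq_norm, Complex.normSq_mk]
    ring
  have hpre : e ⁻¹' Metric.ball (0:ℂ) 1 = {p : ℝ × ℝ | p.1^2 + p.2^2 < 1} := by
    ext p
    simp only [mem_preimage, Metric.mem_ball, Complex.dist_eq, sub_zero, mem_setOf_eq]
    rw [← habs p]
    constructor
    · intro h; nlinarith [norm_nonneg (e p)]
    · intro h; nlinarith [norm_nonneg (e p)]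
  have hS : MeasurableSet {p : ℝ × ℝ | p.1^2 + p.2^2 < 1} := by
    apply measurableSet_lt _ measurable_const
    fun_prop
  rw [hpre] at H2
  set S := {p : ℝ × ℝ | p.1^2 + p.2^2 < 1} with hSdef
  have hGeq : ((fun z : ℂ => c * (1 - ‖z‖ ^ 2) ^ β) ∘ e)
      = fun p : ℝ × ℝ => c * (1 - (p.1^2 + p.2^2)) ^ β := by
    funext p
    simp only [Function.comp_apply, habs p]
  rw [hGeq] at H2
  set G := fun p : ℝ × ℝ => c * (1 - (p.1^2 + p.2^2)) ^ β with hGdef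
  have H3 : Integrable (S.indicator G) ((volume : Measure ℝ).prod volume) := by
    rw [← Measure.volume_eq_prod]
    exact (integrable_indicator_iff hS).mpr H2
  have hae := H3.prod_right_ae
  have hne : volume.restrict (Ioo (0:ℝ) 2⁻¹) ≠ 0 := by
    simp [Measure.restrict_eq_zero, Real.volume_Ioo]
  haveI : (ae (volume.restrict (Ioo (0:ℝ) 2⁻¹))).NeBot := ae_neBot.mpr hne
  obtain ⟨x₀, hint, hx₀⟩ :=
    ((ae_restrict_of_ae hae).and (ae_restrict_mem (measurableSet_Ioo (a := (0:ℝ)) (b := 2⁻¹)))).exists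
  obtain ⟨hx₀0, hx₀half⟩ := hx₀
  have hx₀1 : x₀ < 1 := by linarith [hx₀half]  -- x₀ < 1/2 < 1 ; 2⁻¹
  have hTm : MeasurableSet {y : ℝ | x₀^2 + y^2 < 1} := by
    apply measurableSet_lt _ measurable_const
    fun_prop
  have hslice : (fun y : ℝ => S.indicator G (x₀, y))
      = ({y : ℝ | x₀^2 + y^2 < 1}).indicator (fun y => G (x₀, y)) := by
    funext y
    simp only [Set.indicator_apply, hSdef, mem_setOf_eq]
  rw [hslice] at hint
  have Hslice : IntegrableOn (fun y : ℝ => G (x₀, y)) {y : ℝ | x₀^2 + y^2 < 1} volume :=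
    (integrable_indicator_iff hTm).mp hint
  set a := Real.sqrt (1 - x₀^2) with hadef
  have h1x : (0:ℝ) < 1 - x₀^2 := by nlinarith
  have hapos : 0 < a := Real.sqrt_pos.mpr h1x
  have ha1 : a ≤ 1 := by
    have h := Real.sqrt_le_sqrt (show 1 - x₀^2 ≤ 1 by nlinarith)
    rwa [Real.sqrt_one] at h
  have hasq : a^2 = 1 - x₀^2 := Real.sq_sqrt h1x.le
  have hsub : Ioo (0:ℝ) a ⊆ {y : ℝ | x₀^2 + y^2 < 1} := by
    intro y hy
    obtain ⟨hy0, hya⟩ := hy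
    have : y^2 < a^2 := by nlinarith
    simp only [mem_setOf_eq]
    nlinarith
  have Hfin : IntegrableOn (fun y : ℝ => c * (a^2 - y^2) ^ β) (Ioo 0 a) volume := by
    have := Hslice.mono_set hsub
    have heqf : (fun y : ℝ => G (x₀, y)) = fun y : ℝ => c * (a^2 - y^2) ^ β := by
      funext y
      simp only [hGdef]
      rw [show 1 - (x₀^2 + y^2) = a^2 - y^2 by rw [hasq]; ring]
    rwa [heqf] at this
  exact not_integrableOn_1d hβ hapos ha1 hc Hfin

end

/-- For `-1 < α < 0`, the `α`-harmonic extension `e` of `θ ↦ e^{-iθ}`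
satisfies `∂̄e(z) = (α+1)(1-|z|²)^α`; consequently `∂̄e ∉ L^p(𝔻)` for `p ≥ -1/α`, and
`∂̄e ∉ H^1_G(𝔻)`. -/
theorem wdzbar_poissonExt_expNeg (α : ℝ) (hα1 : -1 < α) (hα2 : α < 0) :
    (∀ z ∈ Metric.ball (0 : ℂ) 1,
        wdzbar (poissonExt α fun t => Complex.exp (-Complex.I * t)) z =
          ((α : ℂ) + 1) * (((1 - ‖z‖ ^ 2) ^ α : ℝ) : ℂ)) ∧
      (∀ p : ℝ, -1 / α ≤ p →
        ¬ MeasureTheory.IntegrableOn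
            (fun z =>
              ‖wdzbar (poissonExt α fun t => Complex.exp (-Complex.I * t)) z‖ ^ p)
            (Metric.ball (0 : ℂ) 1) MeasureTheory.volume) ∧
      ¬ ∃ C : ℝ, ∀ r ∈ Set.Ioo (0:ℝ) 1,
          Mp 1 r (wdzbar (poissonExt α fun t => Complex.exp (-Complex.I * t))) ≤ C := by
  have hα0 : α ≠ 0 := ne_of_lt hα2
  have hα1p : (0:ℝ) < α + 1 := by linarith
  set eN := poissonExt α fun t => Complex.exp (-Complex.I * t) with heN
  have part1 : ∀ z ∈ Metric.ball (0 : ℂ) 1,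
      wdzbar eN z = ((α : ℂ) + 1) * (((1 - ‖z‖ ^ 2) ^ α : ℝ) : ℂ) := by
    intro z hz
    have hEq : Set.EqOn eN (Efun α) (Metric.ball (0:ℂ) 1) := fun w hw => poissonExt_eq α hw
    have hfe : fderiv ℝ eN z = fderiv ℝ (Efun α) z :=
      Filter.EventuallyEq.fderiv_eq
        (Filter.eventuallyEq_of_mem (Metric.isOpen_ball.mem_nhds hz) hEq)
    have hw : wdzbar eN z = wdzbar (Efun α) z := by
      unfold wdzbar
      rw [hfe]
    rw [hw]
    rcases eq_or_ne z 0 with rfl | hz0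
    · exact wdzbar_Efun_zero α
    · exact wdzbar_Efun_ne α (by simpa [Complex.dist_eq] using hz) hz0
  refine ⟨part1, ?_, ?_⟩
  · intro p hp H
    have hβ : α * p ≤ -1 := by
      have h2 : α * p ≤ α * (-1/α) := by
        apply mul_le_mul_of_nonpos_left hp (le_of_lt hα2) |>.trans_eq rfl
      rwa [show α * (-1/α) = -1 by field_simp] at h2
    have hc : (0:ℝ) < (α+1) ^ p := Real.rpow_pos_of_pos hα1p p
    have hEqOn : Set.EqOn (fun z => ‖wdzbar eN z‖ ^ p)
        (fun z : ℂ => (α+1) ^ p * (1 - ‖z‖ ^ 2) ^ (α * p))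
        (Metric.ball (0:ℂ) 1) := by
      intro z hz
      have hz1 : ‖z‖ < 1 := by simpa [Complex.dist_eq] using hz
      have hpos : (0:ℝ) < 1 - ‖z‖ ^ 2 := by nlinarith [norm_nonneg z]
      have habs : ‖wdzbar eN z‖ = (α+1) * (1 - ‖z‖ ^ 2) ^ α := by
        rw [part1 z hz, norm_mul]
        rw [show ((α:ℂ)+1) = ((α+1 : ℝ):ℂ) by push_cast; ring]
        rw [Complex.norm_real, Real.norm_eq_abs, Complex.norm_real, Real.norm_eq_abs, _root_.abs_of_pos hα1p,
          _root_.abs_of_pos (Real.rpow_pos_of_pos hpos α)]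
      simp only
      rw [habs, Real.mul_rpow hα1p.le (Real.rpow_pos_of_pos hpos α).le,
        Real.rpow_mul hpos.le]
    have H2 := H.congr_fun hEqOn measurableSet_ball
    exact not_integrableOn_disk hβ hc H2
  · rintro ⟨C, hC⟩
    have hM : ∀ r ∈ Ioo (0:ℝ) 1, Mp 1 r (wdzbar eN) = (α+1) * (1-r^2) ^ α := by
      intro r hr
      obtain ⟨hr0, hr1⟩ := hr
      have habsr : ∀ θ : ℝ, ‖(r:ℂ) * Complex.exp (Complex.I * θ)‖ = r := by
        intro θ
        rw [norm_mul, Complex.norm_exp, Complex.norm_real, Real.norm_eq_abs, _root_.abs_of_pos hr0]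
        simp
      have hmem : ∀ θ : ℝ, ((r:ℂ) * Complex.exp (Complex.I * θ)) ∈ Metric.ball (0:ℂ) 1 := by
        intro θ
        simp only [Metric.mem_ball, Complex.dist_eq, sub_zero]
        rw [habsr θ]
        exact hr1
      have hval : ∀ θ : ℝ,
          ‖wdzbar eN ((r:ℂ) * Complex.exp (Complex.I * θ))‖ ^ (1:ℝ)
            = (α+1) * (1-r^2) ^ α := by
        intro θ
        rw [Real.rpow_one, part1 _ (hmem θ), norm_mul,
          show ((α:ℂ)+1) = ((α+1 : ℝ):ℂ) by push_cast; ring,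
          Complex.norm_real, Real.norm_eq_abs, Complex.norm_real, Real.norm_eq_abs, habsr θ, _root_.abs_of_pos hα1p]
        have hpos : (0:ℝ) < 1 - r ^ 2 := by nlinarith
        rw [_root_.abs_of_pos (Real.rpow_pos_of_pos hpos α)]
      rw [Mp]
      rw [intervalIntegral.integral_congr (g := fun _ : ℝ => (α+1) * (1-r^2) ^ α)
        (fun θ _ => hval θ)]
      rw [intervalIntegral.integral_const, smul_eq_mul]
      have hπ : Real.pi ≠ 0 := Real.pi_ne_zero
      rw [show (1:ℝ)/(2*Real.pi) * ((2*Real.pi - 0) * ((α+1) * (1-r^2) ^ α))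
          = (α+1) * (1-r^2) ^ α by field_simp; ring]
      rw [show (1:ℝ)/1 = 1 by norm_num, Real.rpow_one]
    set K := max 2 (C/(α+1) + 1) with hK
    have hK2 : (2:ℝ) ≤ K := le_max_left _ _
    have hK1 : (1:ℝ) < K := lt_of_lt_of_le one_lt_two hK2
    have hK0 : (0:ℝ) < K := by linarith
    set t := K ^ (1/α) with ht
    have ht0 : 0 < t := Real.rpow_pos_of_pos hK0 _
    have ht1 : t < 1 := by
      apply Real.rpow_lt_one_of_one_lt_of_neg hK1
      exact div_neg_of_pos_of_neg one_pos hα2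
    set r := Real.sqrt (1 - t) with hr
    have hr0 : 0 < r := Real.sqrt_pos.mpr (by linarith)
    have hr1 : r < 1 := by
      have h := Real.sqrt_lt_sqrt (by linarith : (0:ℝ) ≤ 1 - t) (by linarith : 1 - t < 1)
      rwa [Real.sqrt_one] at h
    have h1r : 1 - r^2 = t := by
      rw [hr, Real.sq_sqrt (by linarith : (0:ℝ) ≤ 1 - t)]
      ring
    have htα : t ^ α = K := by
      rw [ht, ← Real.rpow_mul hK0.le]
      rw [show 1/α * α = 1 by field_simp]
      exact Real.rpow_one K
    have hMval : Mp 1 r (wdzbar eN) = (α+1) * K := by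
      rw [hM r ⟨hr0, hr1⟩, h1r, htα]
    have hgt : C < (α+1) * K := by
      have h3 : C/(α+1) < K := by
        have : C/(α+1) + 1 ≤ K := le_max_right _ _
        linarith
      calc C = (C/(α+1)) * (α+1) := by field_simp
      _ < K * (α+1) := by apply mul_lt_mul_of_pos_right h3 hα1p
      _ = (α+1) * K := by ring
    have := hC r ⟨hr0, hr1⟩
    rw [hMval] at this
    linarith
end
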